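/- For any integer N ≥ 2 and any real U with 1 ≤ U ≤ N, the number of pairs of integers (c, d) with U ≤ c ≤ 2U, |d| ≤ N, and |c² − d²| ≤ N is O(N). -/

import Mathlib

theorem stmt_2 :
    ∃ C : ℝ, 0 < C ∧ ∀ N : ℤ, 2 ≤ N → ∀ U : ℝ, 1 ≤ U → U ≤ N →
      ((((Finset.Icc (1:ℤ) (2*N)) ×ˢ (Finset.Icc (-N) N)).filter
        (fun x => U ≤ (x.1 : ℝ) ∧ (x.1 : ℝ) ≤ 2*U ∧ |x.1^2 - x.2^2| ≤ N)).card : ℝ)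
        ≤ C * N := by
  refine ⟨12, by norm_num, ?_⟩
  intro N hN U hU1 hUN
  have hU0 : (0:ℝ) < U := lt_of_lt_of_le one_pos hU1
  set S := (((Finset.Icc (1:ℤ) (2*N)) ×ˢ (Finset.Icc (-N) N)).filter
        (fun x => U ≤ (x.1 : ℝ) ∧ (x.1 : ℝ) ≤ 2*U ∧ |x.1^2 - x.2^2| ≤ N)) with hSdef
  set M : ℤ := ⌊(N:ℝ)/U⌋ with hMdef
  set T := Finset.Icc ⌈U⌉ ⌊2*U⌋ ×ˢ Finset.Icc (-M) M with hTdef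
  have key : ∀ x ∈ S, (⌈U⌉ ≤ x.1 ∧ x.1 ≤ ⌊2*U⌋) ∧
      abs ((x.1:ℝ) - |(x.2:ℝ)|) ≤ (N:ℝ)/U := by
    intro x hx
    rw [hSdef, Finset.mem_filter] at hx
    obtain ⟨-, h1, h2, h3⟩ := hx
    have h3' : |((x.1:ℝ))^2 - (x.2:ℝ)^2| ≤ (N:ℝ) := by exact_mod_cast h3
    refine ⟨⟨Int.ceil_le.mpr h1, Int.le_floor.mpr h2⟩, ?_⟩
    have e1 : abs ((x.1:ℝ) - |(x.2:ℝ)|) * ((x.1:ℝ) + |(x.2:ℝ)|) =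
        |(x.1:ℝ)^2 - (x.2:ℝ)^2| := by
      rw [show |(x.1:ℝ)^2 - (x.2:ℝ)^2| = |((x.1:ℝ) - |(x.2:ℝ)|) * ((x.1:ℝ) + |(x.2:ℝ)|)| by
        rw [show ((x.1:ℝ) - |(x.2:ℝ)|) * ((x.1:ℝ) + |(x.2:ℝ)|) = (x.1:ℝ)^2 - |(x.2:ℝ)|^2 by ring,
          sq_abs]]
      rw [abs_mul, abs_of_nonneg (le_trans (le_trans hU0.le h1)
        (le_add_of_nonneg_right (abs_nonneg _)))]
    rw [le_div_iff₀ hU0]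
    calc abs ((x.1:ℝ) - |(x.2:ℝ)|) * U ≤ abs ((x.1:ℝ) - |(x.2:ℝ)|) * ((x.1:ℝ) + |(x.2:ℝ)|) := by
          apply mul_le_mul_of_nonneg_left _ (abs_nonneg _)
          exact le_trans h1 (le_add_of_nonneg_right (abs_nonneg _))
      _ = |(x.1:ℝ)^2 - (x.2:ℝ)^2| := e1
      _ ≤ N := h3'
  -- split S according to the sign of d
  have hsplit : S.card = (S.filter (fun x => 0 ≤ x.2)).card
      + (S.filter (fun x => ¬ 0 ≤ x.2)).card :=
    (Finset.card_filter_add_card_filter_not _).symm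
  have habsM : ∀ e : ℤ, |(e:ℝ)| ≤ (N:ℝ)/U → e ∈ Finset.Icc (-M) M := by
    intro e he
    have : |e| ≤ M := Int.le_floor.mpr (by exact_mod_cast he)
    have := abs_le.mp this
    exact Finset.mem_Icc.mpr this
  have i1 : (S.filter (fun x => 0 ≤ x.2)).card ≤ T.card := by
    apply Finset.card_le_card_of_injOn (fun x => (x.1, x.2 - x.1))
    · intro x hx
      rw [Finset.mem_coe, Finset.mem_filter] at hx
      obtain ⟨hxS, hd⟩ := hx
      obtain ⟨⟨ha, hb⟩, habs⟩ := key x hxS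
      rw [hTdef, Finset.mem_coe, Finset.mem_product]
      refine ⟨Finset.mem_Icc.mpr ⟨ha, hb⟩, habsM _ ?_⟩
      have : |((x.2 - x.1 : ℤ):ℝ)| = abs ((x.1:ℝ) - |(x.2:ℝ)|) := by
        push_cast
        rw [abs_of_nonneg (by exact_mod_cast hd : (0:ℝ) ≤ (x.2:ℝ)), abs_sub_comm]
      rw [this]; exact habs
    · intro x _ y _ h
      simp only [Prod.mk.injEq] at h
      exact Prod.ext h.1 (by omega)
  have i2 : (S.filter (fun x => ¬ 0 ≤ x.2)).card ≤ T.card := by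
    apply Finset.card_le_card_of_injOn (fun x => (x.1, x.2 + x.1))
    · intro x hx
      rw [Finset.mem_coe, Finset.mem_filter] at hx
      obtain ⟨hxS, hd⟩ := hx
      obtain ⟨⟨ha, hb⟩, habs⟩ := key x hxS
      rw [hTdef, Finset.mem_coe, Finset.mem_product]
      refine ⟨Finset.mem_Icc.mpr ⟨ha, hb⟩, habsM _ ?_⟩
      have hd' : (x.2:ℝ) < 0 := by exact_mod_cast (not_le.mp hd)
      have : |((x.2 + x.1 : ℤ):ℝ)| = abs ((x.1:ℝ) - |(x.2:ℝ)|) := by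
        push_cast
        rw [abs_of_neg hd']
        ring_nf
      rw [this]; exact habs
    · intro x _ y _ h
      simp only [Prod.mk.injEq] at h
      exact Prod.ext h.1 (by omega)
  -- bound the card of T
  have hN1 : (1:ℝ) ≤ (N:ℝ)/U := (one_le_div hU0).mpr hUN
  have hM1 : (1:ℤ) ≤ M := Int.le_floor.mpr (by exact_mod_cast hN1)
  have hMr : (M:ℝ) ≤ (N:ℝ)/U := Int.floor_le _
  have ha1 : U ≤ (⌈U⌉:ℝ) := Int.le_ceil U
  have ha2 : ((⌈U⌉:ℤ):ℝ) < U + 1 := Int.ceil_lt_add_one U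
  have hb1 : ((⌊2*U⌋:ℤ):ℝ) ≤ 2*U := Int.floor_le _
  have hb2 : 2*U - 1 < ((⌊2*U⌋:ℤ):ℝ) := Int.sub_one_lt_floor _
  have hTcard : (T.card : ℝ) ≤ 6 * N := by
    rw [hTdef, Finset.card_product, Int.card_Icc, Int.card_Icc]
    have hnn1 : (0:ℤ) ≤ ⌊2*U⌋ + 1 - ⌈U⌉ := by
      have : (0:ℝ) < ((⌊2*U⌋:ℤ):ℝ) + 1 - (⌈U⌉:ℤ) := by linarith
      exact_mod_cast this.le
    have hnn2 : (0:ℤ) ≤ M + 1 - -M := by linarith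
    rw [Nat.cast_mul]
    have c1 : (((⌊2*U⌋ + 1 - ⌈U⌉).toNat : ℕ) : ℝ) ≤ U + 1 := by
      rw [show ((((⌊2*U⌋ + 1 - ⌈U⌉).toNat : ℕ)) : ℝ) = (((⌊2*U⌋ + 1 - ⌈U⌉).toNat : ℤ) : ℝ) by
        push_cast; ring, Int.toNat_of_nonneg hnn1]
      push_cast; linarith
    have c2 : (((M + 1 - -M).toNat : ℕ) : ℝ) ≤ 3 * ((N:ℝ)/U) := by
      rw [show ((((M + 1 - -M).toNat : ℕ)) : ℝ) = (((M + 1 - -M).toNat : ℤ) : ℝ) by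
        push_cast; ring, Int.toNat_of_nonneg hnn2]
      push_cast; linarith
    calc (((⌊2*U⌋ + 1 - ⌈U⌉).toNat : ℕ) : ℝ) * ((M + 1 - -M).toNat : ℕ)
        ≤ (U + 1) * (3 * ((N:ℝ)/U)) := by
          apply mul_le_mul c1 c2 (by positivity) (by linarith)
      _ ≤ (2*U) * (3 * ((N:ℝ)/U)) := by
          apply mul_le_mul_of_nonneg_right (by linarith) (by positivity)
      _ = 6 * N := by field_simp; ring
  have : (S.card : ℝ) ≤ 2 * T.card := by
    rw [hsplit]
    push_cast
    have := (Nat.cast_le (α := ℝ)).mpr i1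
    have := (Nat.cast_le (α := ℝ)).mpr i2
    linarith
  calc (S.card : ℝ) ≤ 2 * T.card := this
    _ ≤ 2 * (6 * N) := by linarith
    _ = 12 * N := by ring
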